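/- Let ρ be a Rouquier core for (p,w) and I the set of partitions with p-core ρ and p-weight w. Then the set I_res of p-restricted partitions in I equals the set of λ ∈ I whose p-quotient [λ⁰,…,λ^{p−1}] satisfies λ^{p−1} = ∅, and the set I_reg of p-regular partitions in I equals the set of λ ∈ I whose p-quotient satisfies λ⁰ = ∅. -/

import Mathlib

/-!
Statement 8: Let `ρ` be a Rouquier core for `(p, w)` and `I` the set of partitions
with `p`-core `ρ` and `p`-weight `w`.  Then the set `I_res` of `p`-restricted
partitions in `I` equals the set of `λ ∈ I` whose `p`-quotient `[λ⁰,…,λ^{p-1}]`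
satisfies `λ^{p-1} = ∅`, and the set `I_reg` of `p`-regular partitions in `I` equals
the set of `λ ∈ I` whose `p`-quotient satisfies `λ⁰ = ∅`.
-/

/-- A partition, encoded as a weakly decreasing, eventually-zero function giving its
parts (`l i` is the `(i+1)`-st part). -/
def IsPartition (l : ℕ → ℕ) : Prop := Antitone l ∧ ∃ N, ∀ i, N ≤ i → l i = 0

/-- The `i`-th beta number (0-indexed) of `l` on an abacus with `m` beads:
`β i = l i + m - 1 - i`. -/
def beta (m : ℕ) (l : ℕ → ℕ) (i : ℕ) : ℕ := l i + (m - 1 - i)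

/-- The set of beta numbers (bead positions) of `l` on an abacus with `m` beads;
position `b` lies on runner `b % p` in row `b / p`. -/
def betaSet (m : ℕ) (l : ℕ → ℕ) : Finset ℕ := (Finset.range m).image (beta m l)

/-- The number of beads of `l` on runner `s` of the abacus with `p` runners and `m`
beads. -/
def runnerCount (p m : ℕ) (l : ℕ → ℕ) (s : ℕ) : ℕ :=
  ((betaSet m l).filter fun b => b % p = s).card

/-- The `p`-weight of `l`: the total number of one-row upward bead moves (i.e. rim
`p`-hook removals) needed to push all beads fully up their runners. -/
def pweight (p m : ℕ) (l : ℕ → ℕ) : ℕ :=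
  (∑ b ∈ betaSet m l, b / p) - ∑ s ∈ Finset.range p, (runnerCount p m l s).choose 2

/-- `l` is a `p`-core: no rim `p`-hook can be removed (all beads are fully up). -/
def IsCore (p m : ℕ) (l : ℕ → ℕ) : Prop := pweight p m l = 0

/-- `l` has `p`-core `ρ` (on the abacus with `m` beads): `ρ` is a core and is obtained
from `l` by sliding all beads fully up their runners, i.e. runner counts agree. -/
def HasCore (p m : ℕ) (l ρ : ℕ → ℕ) : Prop :=
  IsCore p m ρ ∧ ∀ s, runnerCount p m l s = runnerCount p m ρ s

/-- The set of rows occupied by beads of `l` on runner `s`. -/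
def runnerRows (p m : ℕ) (l : ℕ → ℕ) (s : ℕ) : Finset ℕ :=
  ((betaSet m l).filter fun b => b % p = s).image fun b => b / p

/-- The `j`-th part (0-indexed) of the `s`-th partition `λ^s` in the `p`-quotient of
`l`: the number of vacant positions above the `(j+1)`-st lowest bead on runner `s`. -/
def pquot (p m : ℕ) (l : ℕ → ℕ) (s j : ℕ) : ℕ :=
  let c := runnerCount p m l s
  if j < c then ((runnerRows p m l s).sort (· ≤ ·)).getD (c - 1 - j) 0 - (c - 1 - j)
  else 0

/-- The cells of the Young diagram of a partition (row, column), 0-indexed. -/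
def cells (l : ℕ → ℕ) : Set (ℕ × ℕ) := {q | q.2 < l q.1}

/-- `ρ` is a Rouquier core for `(p, w)` (on the abacus with `m` beads): it is a
`p`-core with at least `w - 1` more beads on runner `i` than on runner `i - 1`, for
`i = 1, …, p-1`. -/
def IsRouquierCore (p m w : ℕ) (ρ : ℕ → ℕ) : Prop :=
  IsCore p m ρ ∧ ∀ i, 1 ≤ i → i < p →
    runnerCount p m ρ (i - 1) + (w - 1) ≤ runnerCount p m ρ i

/-- A partition is `p`-regular if it does not have `p` (or more) identical nonzero
parts. -/
def PRegular (p : ℕ) (l : ℕ → ℕ) : Prop := ∀ i, l (i + (p - 1)) = l i → l i = 0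

/-- A partition is `p`-restricted if its conjugate is `p`-regular; equivalently,
successive parts differ by less than `p`. -/
def PRestricted (p : ℕ) (l : ℕ → ℕ) : Prop := ∀ i, l i - l (i + 1) < p

section RRRAux
open Finset


/-- index function into the sorted list of a finset of naturals -/
noncomputable def sfun (Q : Finset ℕ) (k : ℕ) : ℕ := ((Q.sort (· ≤ ·)).getD k 0)

lemma sfun_lt (Q : Finset ℕ) {k l : ℕ} (hkl : k < l) (hl : l < Q.card) :
    sfun Q k < sfun Q l := by
  have hlen : (Q.sort (· ≤ ·)).length = Q.card := Finset.length_sort _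
  have hk' : k < (Q.sort (· ≤ ·)).length := by omega
  have hl' : l < (Q.sort (· ≤ ·)).length := by omega
  have := Q.sortedLT_sort.strictMono_get (show (⟨k, hk'⟩ : Fin _) < ⟨l, hl'⟩ from hkl)
  rw [sfun, sfun, List.getD_eq_getElem _ _ hk', List.getD_eq_getElem _ _ hl']
  exact this

lemma sfun_mem (Q : Finset ℕ) {k : ℕ} (hk : k < Q.card) : sfun Q k ∈ Q := by
  have hlen : (Q.sort (· ≤ ·)).length = Q.card := Finset.length_sort _
  have hk' : k < (Q.sort (· ≤ ·)).length := by omega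
  rw [sfun, List.getD_eq_getElem _ _ hk']
  exact (Finset.mem_sort _).1 (List.getElem_mem hk')

lemma sfun_surj (Q : Finset ℕ) {q : ℕ} (hq : q ∈ Q) : ∃ k < Q.card, sfun Q k = q := by
  have hlen : (Q.sort (· ≤ ·)).length = Q.card := Finset.length_sort _
  have : q ∈ Q.sort (· ≤ ·) := (Finset.mem_sort _).2 hq
  obtain ⟨⟨k, hk⟩, hkq⟩ := List.mem_iff_get.1 this
  exact ⟨k, by omega, by rw [sfun, List.getD_eq_getElem _ _ hk]; exact hkq⟩

lemma sfun_mono (Q : Finset ℕ) {k l : ℕ} (hkl : k ≤ l) (hl : l < Q.card) :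
    sfun Q k + (l - k) ≤ sfun Q l := by
  induction l with
  | zero => simpa [Nat.le_zero.1 hkl]
  | succ n ih =>
    rcases Nat.eq_or_lt_of_le hkl with rfl | h
    · simp
    · have h1 : sfun Q n < sfun Q (n+1) := sfun_lt Q (by omega) hl
      have h2 := ih (by omega) (by omega)
      omega

lemma le_sfun (Q : Finset ℕ) {k : ℕ} (hk : k < Q.card) : k ≤ sfun Q k := by
  have := sfun_mono Q (Nat.zero_le k) hk
  omega

lemma sum_eq_sum_sfun (Q : Finset ℕ) : Q.sum id = ∑ k ∈ range Q.card, sfun Q k := by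
  refine (Finset.sum_bij (fun k hk => sfun Q k) ?_ ?_ ?_ ?_).symm
  · intro k hk; exact sfun_mem Q (mem_range.1 hk)
  · intro a ha b hb hab
    by_contra hne
    rcases Nat.lt_or_ge a b with h | h
    · exact absurd hab (Nat.ne_of_lt (sfun_lt Q h (mem_range.1 hb)))
    · exact absurd hab.symm (Nat.ne_of_lt (sfun_lt Q (by omega) (mem_range.1 ha)))
  · intro q hq; obtain ⟨k, hk, hkq⟩ := sfun_surj Q hq; exact ⟨k, mem_range.2 hk, hkq⟩
  · intro k hk; rfl

lemma sum_range_id_choose (n : ℕ) : ∑ k ∈ range n, k = n.choose 2 := by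
  induction n with
  | zero => simp
  | succ n ih => rw [Finset.sum_range_succ, ih, Nat.choose_succ_succ, Nat.choose_one_right]; ring
/-- displacement of a finset of rows -/
noncomputable def ddisp (Q : Finset ℕ) : ℕ := Q.sum id - Q.card.choose 2

lemma ddisp_eq (Q : Finset ℕ) : ddisp Q = ∑ k ∈ range Q.card, (sfun Q k - k) := by
  have h1 : Q.sum id = ∑ k ∈ range Q.card, sfun Q k := sum_eq_sum_sfun Q
  have h2 : ∑ k ∈ range Q.card, sfun Q k
      = (∑ k ∈ range Q.card, (sfun Q k - k)) + ∑ k ∈ range Q.card, k := by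
    rw [← Finset.sum_add_distrib]
    refine Finset.sum_congr rfl fun k hk => ?_
    have := le_sfun Q (mem_range.1 hk); omega
  rw [ddisp, h1, h2, sum_range_id_choose]; omega

lemma choose_le_sum (Q : Finset ℕ) : Q.card.choose 2 ≤ Q.sum id := by
  have := ddisp_eq Q
  rw [sum_eq_sum_sfun Q, ← sum_range_id_choose]
  exact Finset.sum_le_sum fun k hk => le_sfun Q (mem_range.1 hk)

lemma mem_lt_card_add_ddisp (Q : Finset ℕ) {q : ℕ} (hq : q ∈ Q) : q < Q.card + ddisp Q := by
  obtain ⟨k, hk, rfl⟩ := sfun_surj Q hq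
  have h1 : sfun Q k - k ≤ ddisp Q := by
    rw [ddisp_eq]
    exact Finset.single_le_sum (f := fun k => sfun Q k - k) (fun i _ => Nat.zero_le _)
      (mem_range.2 hk)
  have := le_sfun Q hk
  omega

lemma card_le_of_not_mem (Q : Finset ℕ) {q : ℕ} (hq : q < Q.card) (hq' : q ∉ Q) :
    Q.card ≤ q + ddisp Q := by
  have hsq : q + 1 ≤ sfun Q q := by
    have h1 := le_sfun Q hq
    rcases Nat.eq_or_lt_of_le h1 with h | h
    · exact absurd (h ▸ sfun_mem Q hq) hq'
    · omega
  have key : ∀ k, q ≤ k → k < Q.card → 1 ≤ sfun Q k - k := by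
    intro k hk hk'
    have := sfun_mono Q hk hk'
    omega
  have : ∑ k ∈ Finset.Ico q Q.card, 1 ≤ ∑ k ∈ Finset.Ico q Q.card, (sfun Q k - k) :=
    Finset.sum_le_sum fun k hk => key k (Finset.mem_Ico.1 hk).1 (Finset.mem_Ico.1 hk).2
  have h2 : ∑ k ∈ Finset.Ico q Q.card, (sfun Q k - k) ≤ ddisp Q := by
    rw [ddisp_eq]
    exact Finset.sum_le_sum_of_subset (by rw [Finset.range_eq_Ico]; exact Finset.Ico_subset_Ico (Nat.zero_le _) le_rfl)
  simp only [Finset.sum_const, Nat.card_Ico, smul_eq_mul, mul_one] at this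
  omega

lemma mem_iff_of_ddisp_zero (Q : Finset ℕ) (h : ddisp Q = 0) {q : ℕ} : q ∈ Q ↔ q < Q.card := by
  constructor
  · intro hq; have := mem_lt_card_add_ddisp Q hq; omega
  · intro hq; by_contra hq'; have := card_le_of_not_mem Q hq hq'; omega

lemma sfun_eq_of_ddisp_zero (Q : Finset ℕ) (h : ddisp Q = 0) {k : ℕ} (hk : k < Q.card) :
    sfun Q k = k := by
  have h1 := le_sfun Q hk
  have h2 : sfun Q k - k ≤ ddisp Q := by
    rw [ddisp_eq]
    exact Finset.single_le_sum (f := fun k => sfun Q k - k) (fun i _ => Nat.zero_le _)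
      (mem_range.2 hk)
  omega

lemma ddisp_gap (Q : Finset ℕ) (h : ddisp Q ≠ 0) :
    ∃ j e, 1 ≤ e ∧ j < Q.card ∧ j ∉ Q ∧ j + e ∈ Q ∧ j + e - 1 ∉ Q ∧
      (Q.card - j) * e ≤ ddisp Q := by
  classical
  have hex : ∃ k, k < Q.card ∧ sfun Q k ≠ k := by
    by_contra hno
    push_neg at hno
    rw [ddisp_eq] at h
    refine h (Finset.sum_eq_zero fun k hk => ?_)
    rw [hno k (mem_range.1 hk)]; omega
  set j := Nat.find hex with hjdef
  obtain ⟨hjc, hjne⟩ : j < Q.card ∧ sfun Q j ≠ j := Nat.find_spec hex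
  have hjmin : ∀ i, i < j → i < Q.card → sfun Q i = i := by
    intro i hi hic
    by_contra hne
    have := Nat.find_min hex (m := i) (by omega)
    exact this ⟨hic, hne⟩
  have hje := le_sfun Q hjc
  set e := sfun Q j - j with he
  have he1 : 1 ≤ e := by omega
  have hsj : sfun Q j = j + e := by omega
  have hlow : ∀ q ∈ Q, q < j + e → q < j := by
    intro q hq hqe
    obtain ⟨i, hic, rfl⟩ := sfun_surj Q hq
    rcases Nat.lt_or_ge i j with h' | h'
    · rw [hjmin i h' hic]; exact h'
    · have := sfun_mono Q h' hic; omega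
  refine ⟨j, e, he1, hjc, ?_, hsj ▸ sfun_mem Q hjc, ?_, ?_⟩
  · intro hj
    have := hlow j hj (by omega); omega
  · intro hj
    have := hlow _ hj (by omega); omega
  · have key : ∀ k, j ≤ k → k < Q.card → e ≤ sfun Q k - k := by
      intro k hk hk'
      have := sfun_mono Q hk hk'
      omega
    have h1 : ∑ k ∈ Finset.Ico j Q.card, e ≤ ∑ k ∈ Finset.Ico j Q.card, (sfun Q k - k) :=
      Finset.sum_le_sum fun k hk => key k (Finset.mem_Ico.1 hk).1 (Finset.mem_Ico.1 hk).2
    have h2 : ∑ k ∈ Finset.Ico j Q.card, (sfun Q k - k) ≤ ddisp Q := by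
      rw [ddisp_eq]
      exact Finset.sum_le_sum_of_subset (by rw [Finset.range_eq_Ico]; exact Finset.Ico_subset_Ico (Nat.zero_le _) le_rfl)
    simp only [Finset.sum_const, Nat.card_Ico, smul_eq_mul, mul_comm] at h1
    calc (Q.card - j) * e ≤ _ := h1
    _ ≤ _ := h2
lemma beta_strict_anti {m : ℕ} {lam : ℕ → ℕ} (hanti : Antitone lam)
    {i j : ℕ} (hij : i < j) (hj : j < m) : beta m lam j < beta m lam i := by
  have h1 : lam j ≤ lam i := hanti (le_of_lt hij)
  unfold beta; omega

lemma beta_anti {m : ℕ} {lam : ℕ → ℕ} (hanti : Antitone lam)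
    {i j : ℕ} (hij : i ≤ j) (hj : j < m) : beta m lam j ≤ beta m lam i := by
  rcases Nat.eq_or_lt_of_le hij with rfl | h
  · exact le_rfl
  · exact le_of_lt (beta_strict_anti hanti h hj)

lemma mem_betaSet {m : ℕ} {lam : ℕ → ℕ} {b : ℕ} :
    b ∈ betaSet m lam ↔ ∃ i < m, beta m lam i = b := by
  simp [betaSet, Finset.mem_image, Finset.mem_range]

lemma card_betaSet {m : ℕ} {lam : ℕ → ℕ} (hanti : Antitone lam) :
    (betaSet m lam).card = m := by
  rw [betaSet, Finset.card_image_of_injOn, Finset.card_range]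
  intro i hi j hj hij
  simp only [Finset.mem_coe, Finset.mem_range] at hi hj
  by_contra hne
  rcases Nat.lt_or_ge i j with h | h
  · exact absurd hij (Nat.ne_of_gt (beta_strict_anti hanti h hj))
  · exact absurd hij (Nat.ne_of_lt (beta_strict_anti hanti (by omega) hi))

lemma mem_runnerRows {p m : ℕ} {lam : ℕ → ℕ} (hp : 0 < p) {s q : ℕ} (hs : s < p) :
    q ∈ runnerRows p m lam s ↔ p * q + s ∈ betaSet m lam := by
  constructor
  · intro hq
    simp only [runnerRows, Finset.mem_image, Finset.mem_filter] at hq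
    obtain ⟨b, ⟨hb, hbs⟩, hbq⟩ := hq
    have hbq' : b / p = q := hbq
    have : p * q + s = b := by rw [← hbq', ← hbs]; exact Nat.div_add_mod b p
    rwa [this]
  · intro hb
    simp only [runnerRows, Finset.mem_image, Finset.mem_filter]
    refine ⟨p * q + s, ⟨hb, ?_⟩, ?_⟩
    · show (p * q + s) % p = s
      rw [Nat.mul_add_mod, Nat.mod_eq_of_lt hs]
    · show (p * q + s) / p = q
      rw [Nat.mul_add_div hp, Nat.div_eq_of_lt hs]
      omega

lemma card_runnerRows {p m : ℕ} {lam : ℕ → ℕ} {s : ℕ} :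
    (runnerRows p m lam s).card = runnerCount p m lam s := by
  rw [runnerRows, runnerCount, Finset.card_image_of_injOn]
  intro a ha b hb hab
  simp only [Finset.mem_coe, Finset.mem_filter] at ha hb
  have hab' : a / p = b / p := hab
  have h1 := Nat.div_add_mod a p
  have h2 := Nat.div_add_mod b p
  rw [← h1, ← h2, hab', ha.2, hb.2]

lemma sum_div_eq {p m : ℕ} {lam : ℕ → ℕ} (hp : 0 < p) :
    ∑ b ∈ betaSet m lam, b / p = ∑ s ∈ range p, (runnerRows p m lam s).sum id := by
  rw [← Finset.sum_fiberwise_of_maps_to (g := fun b => b % p) (f := fun b => b / p)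
    (fun b _ => Finset.mem_range.2 (Nat.mod_lt b hp))]
  refine Finset.sum_congr rfl fun s hs => ?_
  rw [runnerRows, Finset.sum_image]
  · rfl
  · intro a ha b hb hab
    simp only [Finset.coe_filter, Set.mem_setOf_eq, Finset.mem_coe, Finset.mem_filter] at ha hb
    have hab' : a / p = b / p := hab
    have h1 := Nat.div_add_mod a p
    have h2 := Nat.div_add_mod b p
    rw [← h1, ← h2, hab', ha.2, hb.2]
/-- abacus form of restrictedness -/
def Rab (p m : ℕ) (lam : ℕ → ℕ) : Prop :=
  ∀ b ∈ betaSet m lam, p ≤ b → ∃ b' ∈ betaSet m lam, b ≤ b' + p ∧ b' < b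

/-- abacus form of regularity -/
def Gab (p m : ℕ) (lam : ℕ → ℕ) : Prop :=
  ∀ x y, (∀ k, k < p → x + k ∈ betaSet m lam) → y < x → y ∈ betaSet m lam

lemma restricted_iff_Rab {p m : ℕ} {lam : ℕ → ℕ} (hp : 0 < p)
    (hanti : Antitone lam) (hlamm : ∀ i, m ≤ i → lam i = 0) :
    PRestricted p lam ↔ Rab p m lam := by
  constructor
  · intro hres b hb hpb
    obtain ⟨i, him, rfl⟩ := mem_betaSet.1 hb
    have hres' := hres i
    by_cases hi1 : i + 1 < m
    · refine ⟨beta m lam (i+1), mem_betaSet.2 ⟨i+1, hi1, rfl⟩, ?_,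
        beta_strict_anti hanti (Nat.lt_succ_self i) hi1⟩
      unfold beta
      omega
    · exfalso
      have h0 : lam (i+1) = 0 := hlamm _ (by omega)
      have : lam i < p := by omega
      have : beta m lam i = lam i := by unfold beta; omega
      omega
  · intro hR i
    by_contra hge
    push_neg at hge
    have hi0 : lam i ≠ 0 := by omega
    have him : i < m := by
      by_contra h
      exact hi0 (hlamm i (by omega))
    have hb : beta m lam i ∈ betaSet m lam := mem_betaSet.2 ⟨i, him, rfl⟩
    have hpb : p ≤ beta m lam i := by unfold beta; omega
    obtain ⟨b', hb', hle, hlt⟩ := hR _ hb hpb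
    obtain ⟨j, hjm, hbj⟩ := mem_betaSet.1 hb'
    have hij : i < j := by
      by_contra h
      have := beta_anti hanti (show j ≤ i by omega) him
      omega
    have h1 : beta m lam j ≤ beta m lam (i+1) := beta_anti hanti (by omega) hjm
    have h2 : i + 1 < m := by omega
    unfold beta at h1 hle hbj
    omega

lemma regular_iff_Gab {p m : ℕ} {lam : ℕ → ℕ} (hp : 0 < p)
    (hanti : Antitone lam) (hlamm : ∀ i, m ≤ i → lam i = 0) :
    PRegular p lam ↔ Gab p m lam := by
  constructor
  · intro hreg x y hwin hyx
    obtain ⟨i, him, hbi⟩ := mem_betaSet.1 (hwin (p-1) (by omega))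
    have claim : ∀ k, k < p → i + k < m ∧ beta m lam (i+k) = x + (p-1) - k := by
      intro k
      induction k with
      | zero => intro _; exact ⟨him, by simpa using hbi⟩
      | succ k ih =>
        intro hk
        obtain ⟨hikm, hik⟩ := ih (by omega)
        obtain ⟨j, hjm, hbj⟩ := mem_betaSet.1 (hwin (p-1-(k+1)) (by omega))
        have hbj' : beta m lam j = x + (p-1) - (k+1) := by rw [hbj]; omega
        have hjgt : i + k < j := by
          by_contra h
          have := beta_anti hanti (show j ≤ i + k by omega) hikm
          omega
        have hik1m : i + (k+1) < m := by omega
        have h1 : beta m lam j ≤ beta m lam (i+(k+1)) :=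
          beta_anti hanti (by omega) hjm
        have h2 : beta m lam (i+(k+1)) < beta m lam (i+k) :=
          beta_strict_anti hanti (by omega) hik1m
        exact ⟨hik1m, by omega⟩
      -- end
    obtain ⟨hipm, hipx⟩ := claim (p-1) (by omega)
    have hlameq : lam (i + (p-1)) = lam i := by
      have e1 : lam i + (m - 1 - i) = x + (p-1) := hbi
      have e2 : lam (i+(p-1)) + (m - 1 - (i+(p-1))) = x + (p-1) - (p-1) := hipx
      omega
    have hlam0 : lam i = 0 := hreg i hlameq
    have hbix : beta m lam i = m - 1 - i := by unfold beta; omega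
    have hxval : x + (p-1) = m - 1 - i := by omega
    -- the set of beads strictly below beta i fills [0, beta i)
    have hinj : Set.InjOn (beta m lam) (Finset.Ico (i+1) m) := by
      intro a ha b hb hab
      simp only [Finset.coe_Ico, Set.mem_Ico] at ha hb
      by_contra hne
      rcases Nat.lt_or_ge a b with h | h
      · exact absurd hab (Nat.ne_of_gt (beta_strict_anti hanti h hb.2))
      · exact absurd hab (Nat.ne_of_lt (beta_strict_anti hanti (by omega) ha.2))
    have hTsub : (Finset.Ico (i+1) m).image (beta m lam) ⊆ Finset.range (beta m lam i) := by
      intro b hb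
      obtain ⟨j, hj, rfl⟩ := Finset.mem_image.1 hb
      simp only [Finset.mem_Ico] at hj
      exact Finset.mem_range.2 (beta_strict_anti hanti (by omega) hj.2)
    have hTcard : ((Finset.Ico (i+1) m).image (beta m lam)).card = m - (i+1) := by
      rw [Finset.card_image_of_injOn hinj, Nat.card_Ico]
    have hTeq : (Finset.Ico (i+1) m).image (beta m lam) = Finset.range (beta m lam i) := by
      apply Finset.eq_of_subset_of_card_le hTsub
      rw [hTcard, Finset.card_range]
      omega
    have hymem : y ∈ Finset.range (beta m lam i) := Finset.mem_range.2 (by omega)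
    rw [← hTeq] at hymem
    obtain ⟨j, hj, hjy⟩ := Finset.mem_image.1 hymem
    simp only [Finset.mem_Ico] at hj
    exact mem_betaSet.2 ⟨j, hj.2, hjy⟩
  · intro hG i hi
    by_cases him : m ≤ i
    · exact hlamm i him
    by_cases hipm : m ≤ i + (p-1)
    · rw [← hi]; exact hlamm _ hipm
    push_neg at him hipm
    have hik : ∀ k, k ≤ p-1 → lam (i+k) = lam i := by
      intro k hk
      have h1 : lam (i+k) ≤ lam i := hanti (by omega)
      have h2 : lam (i+(p-1)) ≤ lam (i+k) := hanti (by omega)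
      omega
    set x := beta m lam (i+(p-1)) with hx
    have hwin : ∀ k, k < p → x + k ∈ betaSet m lam := by
      intro k hk
      refine mem_betaSet.2 ⟨i + (p-1-k), by omega, ?_⟩
      have h1 := hik (p-1-k) (by omega)
      have h2 := hik (p-1) le_rfl
      unfold beta
      rw [h1]
      unfold beta at hx
      rw [h2] at hx
      omega
    have hrange : ∀ y, y < x → y ∈ betaSet m lam := fun y hy => hG x y hwin hy
    -- counting
    have hinj : Set.InjOn (beta m lam) (Finset.range (i+p)) := by
      intro a ha b hb hab
      simp only [Finset.coe_range, Set.mem_Iio] at ha hb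
      by_contra hne
      rcases Nat.lt_or_ge a b with h | h
      · exact absurd hab (Nat.ne_of_gt (beta_strict_anti hanti h (by omega)))
      · exact absurd hab (Nat.ne_of_lt (beta_strict_anti hanti (by omega) (by omega)))
    have hsub : Finset.range x ∪ (Finset.range (i+p)).image (beta m lam) ⊆ betaSet m lam := by
      apply Finset.union_subset
      · intro y hy; exact hrange y (Finset.mem_range.1 hy)
      · intro b hb
        obtain ⟨j, hj, rfl⟩ := Finset.mem_image.1 hb
        exact mem_betaSet.2 ⟨j, by simp at hj; omega, rfl⟩
    have hdisj : Disjoint (Finset.range x) ((Finset.range (i+p)).image (beta m lam)) := by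
      rw [Finset.disjoint_left]
      intro a ha hb
      obtain ⟨j, hj, rfl⟩ := Finset.mem_image.1 hb
      simp only [Finset.mem_range] at ha hj
      have : x ≤ beta m lam j := beta_anti hanti (by omega) (by omega)
      omega
    have hcards : x + (i + p) ≤ m := by
      have h1 := Finset.card_le_card hsub
      rw [Finset.card_union_of_disjoint hdisj, Finset.card_range, card_betaSet hanti,
        Finset.card_image_of_injOn hinj, Finset.card_range] at h1
      exact h1
    have : x = lam (i+(p-1)) + (m - 1 - (i+(p-1))) := rfl
    have h2 := hik (p-1) le_rfl
    omega
lemma pquot_zero_iff {p m : ℕ} {lam : ℕ → ℕ} (s : ℕ) :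
    (∀ j, pquot p m lam s j = 0) ↔ ddisp (runnerRows p m lam s) = 0 := by
  set Q := runnerRows p m lam s with hQ
  have hcard : Q.card = runnerCount p m lam s := card_runnerRows
  constructor
  · intro h
    rw [ddisp_eq]
    refine Finset.sum_eq_zero fun k hk => ?_
    have hk' : k < Q.card := mem_range.1 hk
    have hj := h (Q.card - 1 - k)
    rw [pquot] at hj
    simp only [← hcard, ← hQ] at hj
    rw [if_pos (by omega)] at hj
    have he : Q.card - 1 - (Q.card - 1 - k) = k := by omega
    rw [he] at hj
    exact hj
  · intro h j
    rw [pquot]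
    simp only [← hcard, ← hQ]
    split
    · next hjc =>
      have h2 : sfun Q (Q.card - 1 - j) = Q.card - 1 - j :=
        sfun_eq_of_ddisp_zero Q h (by omega)
      rw [show ((Q.sort (· ≤ ·)).getD (Q.card - 1 - j) 0) = sfun Q (Q.card - 1 - j) from rfl,
        h2]
      omega
    · rfl

lemma ddisp_le {p m w : ℕ} {lam : ℕ → ℕ}
    (hsum : ∑ s ∈ range p, ddisp (runnerRows p m lam s) = w)
    (s : ℕ) (hs : s < p) : ddisp (runnerRows p m lam s) ≤ w := by
  rw [← hsum]
  exact Finset.single_le_sum (f := fun u => ddisp (runnerRows p m lam u))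
    (fun i _ => Nat.zero_le _) (mem_range.2 hs)

lemma ddisp_pair_le {p m w : ℕ} {lam : ℕ → ℕ}
    (hsum : ∑ s ∈ range p, ddisp (runnerRows p m lam s) = w)
    {s t : ℕ} (hst : s ≠ t) (hs : s < p) (ht : t < p) :
    ddisp (runnerRows p m lam s) + ddisp (runnerRows p m lam t) ≤ w := by
  rw [← hsum]
  have h1 : ∑ u ∈ ({s, t} : Finset ℕ), ddisp (runnerRows p m lam u)
      ≤ ∑ u ∈ range p, ddisp (runnerRows p m lam u) := by
    apply Finset.sum_le_sum_of_subset
    intro a ha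
    simp only [Finset.mem_insert, Finset.mem_singleton] at ha
    rcases ha with rfl | rfl <;> exact mem_range.2 (by omega)
  rwa [Finset.sum_pair hst] at h1

lemma Rab_iff {p m w : ℕ} {lam : ℕ → ℕ} (hp : 0 < p) (hw : 0 < w)
    (hc : ∀ s t, s < t → t < p → runnerCount p m lam s + (w-1) ≤ runnerCount p m lam t)
    (hsum : ∑ s ∈ range p, ddisp (runnerRows p m lam s) = w) :
    Rab p m lam ↔ ddisp (runnerRows p m lam (p-1)) = 0 := by
  have hp1 : p - 1 < p := by omega
  have hCr : (runnerRows p m lam (p-1)).card = runnerCount p m lam (p-1) := card_runnerRows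
  constructor
  · -- restricted ⟹ quotient empty, by contradiction
    intro hR
    by_contra hd
    obtain ⟨j, e, he1, hjC, hjQ, hjeQ, hje1Q, hprod⟩ := ddisp_gap _ hd
    have hrQ : p * (j+e) + (p-1) ∈ betaSet m lam := (mem_runnerRows hp hp1).1 hjeQ
    have hbge : p ≤ p * (j+e) + (p-1) :=
      le_trans (Nat.le_mul_of_pos_right p (by omega)) (Nat.le_add_right _ _)
    obtain ⟨b', hb'B, hle, hlt⟩ := hR _ hrQ hbge
    obtain ⟨s', hs'⟩ : ∃ s', b' % p = s' := ⟨_, rfl⟩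
    obtain ⟨q', hq'⟩ : ∃ q', b' / p = q' := ⟨_, rfl⟩
    have hs'p : s' < p := hs' ▸ Nat.mod_lt _ hp
    have hdm : p * q' + s' = b' := by rw [← hs', ← hq']; exact Nat.div_add_mod b' p
    have hq'Q : q' ∈ runnerRows p m lam s' := by
      rw [mem_runnerRows hp hs'p, hdm]; exact hb'B
    have hq'le : q' ≤ j + e := by
      refine Nat.le_of_lt_succ (Nat.lt_of_mul_lt_mul_left (a := p) ?_)
      show p * q' < p * ((j+e)+1)
      have h2 : p * ((j+e)+1) = p * (j+e) + p := by ring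
      omega
    have hq'ge : j + e ≤ q' + 1 := by
      refine Nat.le_of_lt_succ (Nat.lt_of_mul_lt_mul_left (a := p) ?_)
      show p * (j+e) < p * (q'+1+1)
      have h2 : p * (q'+1+1) = p * q' + p + p := by ring
      omega
    rcases Nat.eq_or_lt_of_le hq'le with heq | hlt2
    · -- q' = j+e : then s' < p-1, contradiction via weight bound
      have hpq : p * q' = p * (j+e) := by rw [heq]
      have hs'lt : s' < p - 1 := by omega
      have h1 := mem_lt_card_add_ddisp _ hq'Q
      rw [card_runnerRows] at h1
      have h2 := hc s' (p-1) (by omega) hp1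
      have h3 := ddisp_pair_le hsum (show s' ≠ p-1 by omega) (by omega) hp1
      have h4 : (runnerRows p m lam (p-1)).card - j
          ≤ ((runnerRows p m lam (p-1)).card - j) * e := Nat.le_mul_of_pos_right _ (by omega)
      omega
    · -- q' = j+e-1, s' = p-1 : contradicts the gap
      have hq'r : q' = j + e - 1 := by omega
      have hpe : p * (j+e-1) + p = p * (j+e) := by
        have h' : j + e - 1 + 1 = j + e := by omega
        calc p * (j+e-1) + p = p * ((j+e-1)+1) := by ring
        _ = p * (j+e) := by rw [h']
      have hpq : p * q' = p * (j+e-1) := by rw [hq'r]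
      have hs'e : s' = p - 1 := by omega
      rw [hq'r, hs'e] at hq'Q
      exact hje1Q hq'Q
  · -- quotient empty ⟹ restricted
    intro hd b hb hpb
    obtain ⟨s, hsd⟩ : ∃ s, b % p = s := ⟨_, rfl⟩
    obtain ⟨q, hqd⟩ : ∃ q, b / p = q := ⟨_, rfl⟩
    have hsp : s < p := hsd ▸ Nat.mod_lt _ hp
    have hdm : p * q + s = b := by rw [← hsd, ← hqd]; exact Nat.div_add_mod b p
    have hqQ : q ∈ runnerRows p m lam s := by
      rw [mem_runnerRows hp hsp, hdm]; exact hb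
    have hq1 : 1 ≤ q := by
      rcases Nat.eq_zero_or_pos q with h | h
      · rw [h, Nat.mul_zero] at hdm; omega
      · exact h
    have hqC : q - 1 < (runnerRows p m lam (p-1)).card := by
      by_cases hse : s = p - 1
      · rw [hse] at hqQ
        have := (mem_iff_of_ddisp_zero _ hd).1 hqQ
        omega
      · have h1 := mem_lt_card_add_ddisp _ hqQ
        rw [card_runnerRows] at h1
        have h2 := hc s (p-1) (by omega) hp1
        have h3 := ddisp_le hsum s (by omega)
        omega
    have hmem : q - 1 ∈ runnerRows p m lam (p-1) := (mem_iff_of_ddisp_zero _ hd).2 hqC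
    have hpe : p * (q-1) + p = p * q := by
      have h' : q - 1 + 1 = q := by omega
      calc p * (q-1) + p = p * ((q-1)+1) := by ring
      _ = p * q := by rw [h']
    exact ⟨p * (q-1) + (p-1), (mem_runnerRows hp hp1).1 hmem, by omega, by omega⟩

lemma Gab_iff {p m w : ℕ} {lam : ℕ → ℕ} (hp : 0 < p) (hw : 0 < w)
    (hc : ∀ s t, s < t → t < p → runnerCount p m lam s + (w-1) ≤ runnerCount p m lam t)
    (hsum : ∑ s ∈ range p, ddisp (runnerRows p m lam s) = w) :
    Gab p m lam ↔ ddisp (runnerRows p m lam 0) = 0 := by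
  have hC0r : (runnerRows p m lam 0).card = runnerCount p m lam 0 := card_runnerRows
  constructor
  · -- regular ⟹ quotient empty, by contradiction
    intro hG
    by_contra hd
    obtain ⟨j, e, he1, hjC, hjQ, hjeQ, hje1Q, hprod⟩ := ddisp_gap _ hd
    have hpe : p * (j+e-1) + p = p * (j+e) := by
      have h' : j + e - 1 + 1 = j + e := by omega
      calc p * (j+e-1) + p = p * ((j+e-1)+1) := by ring
      _ = p * (j+e) := by rw [h']
    have hwin : ∀ k, k < p → (p * (j+e-1) + 1) + k ∈ betaSet m lam := by
      intro k hk
      rcases Nat.eq_or_lt_of_le (show k ≤ p - 1 by omega) with heq | hklt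
      · -- k = p-1 : runner 0, row j+e
        have hxk : (p * (j+e-1) + 1) + k = p * (j+e) + 0 := by omega
        rw [hxk, ← mem_runnerRows hp hp]
        exact hjeQ
      · -- k < p-1 : runner k+1, row j+e-1
        have hxk : (p * (j+e-1) + 1) + k = p * (j+e-1) + (k+1) := by omega
        rw [hxk, ← mem_runnerRows hp (show k+1 < p by omega)]
        by_contra hnot
        have hkey : j + e - 1 + ddisp (runnerRows p m lam (k+1)) <
            (runnerRows p m lam (k+1)).card := by
          rw [card_runnerRows]
          have h2 := hc 0 (k+1) (by omega) (by omega)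
          have h3 := ddisp_pair_le hsum (show (0:ℕ) ≠ k+1 by omega) hp (by omega)
          have h4 : e ≤ ((runnerRows p m lam 0).card - j) * e :=
            Nat.le_mul_of_pos_left _ (by omega)
          omega
        have := card_le_of_not_mem _
          (show j + e - 1 < (runnerRows p m lam (k+1)).card by omega) hnot
        omega
    have hyx : p * j < p * (j+e-1) + 1 := by
      have h1 : p * j ≤ p * (j+e-1) := Nat.mul_le_mul_left p (by omega)
      omega
    have hyB := hG _ (p * j) hwin hyx
    rw [show p * j = p * j + 0 by omega, ← mem_runnerRows hp hp] at hyB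
    exact hjQ hyB
  · -- quotient empty ⟹ regular
    intro hd x y hwin hyx
    obtain ⟨s, hsd⟩ : ∃ s, x % p = s := ⟨_, rfl⟩
    obtain ⟨r, hrd⟩ : ∃ r, x / p = r := ⟨_, rfl⟩
    have hsx : s < p := hsd ▸ Nat.mod_lt _ hp
    have hdmx : p * r + s = x := by rw [← hsd, ← hrd]; exact Nat.div_add_mod x p
    have hpr1 : p * (r+1) = p * r + p := by ring
    -- runner-0 bead of the window
    have hr0 : (if s = 0 then r else r + 1) ∈ runnerRows p m lam 0 := by
      by_cases hse : s = 0
      · simp only [if_pos hse]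
        rw [mem_runnerRows hp hp]
        have hh : p * r + 0 = x + 0 := by omega
        rw [hh]
        exact hwin 0 hp
      · simp only [if_neg hse]
        rw [mem_runnerRows hp hp]
        have hh : p * (r+1) + 0 = x + (p - s) := by omega
        rw [hh]
        exact hwin (p - s) (by omega)
    have hr0C : (if s = 0 then r else r + 1) < (runnerRows p m lam 0).card :=
      (mem_iff_of_ddisp_zero _ hd).1 hr0
    obtain ⟨t, htd⟩ : ∃ t, y % p = t := ⟨_, rfl⟩
    obtain ⟨q, hqd⟩ : ∃ q, y / p = q := ⟨_, rfl⟩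
    have hty : t < p := htd ▸ Nat.mod_lt _ hp
    have hdmy : p * q + t = y := by rw [← htd, ← hqd]; exact Nat.div_add_mod y p
    suffices hq : q ∈ runnerRows p m lam t by
      rw [mem_runnerRows hp hty, hdmy] at hq
      exact hq
    by_contra hqQ
    have hqr : q ≤ r := by
      by_contra hgt
      have h1 : p * (r + 1) ≤ p * q := Nat.mul_le_mul_left p (by omega)
      omega
    by_cases ht0 : t = 0
    · rw [ht0] at hqQ
      have hnc : ¬ (q < (runnerRows p m lam 0).card) :=
        fun h => hqQ ((mem_iff_of_ddisp_zero _ hd).2 h)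
      split at hr0C <;> omega
    · -- t ≥ 1
      have hrt : (if s ≤ t then r else r + 1) ∈ runnerRows p m lam t := by
        by_cases hst : s ≤ t
        · simp only [if_pos hst]
          rw [mem_runnerRows hp hty]
          have hh : p * r + t = x + (t - s) := by omega
          rw [hh]
          exact hwin (t - s) (by omega)
        · simp only [if_neg hst]
          rw [mem_runnerRows hp hty]
          have hh : p * (r+1) + t = x + (p - s + t) := by omega
          rw [hh]
          exact hwin (p - s + t) (by omega)
      have h2 := hc 0 t (by omega) hty
      have hq_lt_ct : q < (runnerRows p m lam t).card := by
        rw [card_runnerRows]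
        split at hr0C <;> omega
      have hBq := card_le_of_not_mem _ hq_lt_ct hqQ
      have hdt := ddisp_le hsum t hty
      rw [card_runnerRows] at hBq
      by_cases hse : s = 0
      · -- equality case : q = r and r ∈ runnerRows t
        rw [if_pos hse] at hr0C
        have hqreq : q = r := by omega
        rw [if_pos (by omega : s ≤ t)] at hrt
        rw [← hqreq] at hrt
        exact hqQ hrt
      · rw [if_neg hse] at hr0C
        omega

lemma pweight_eq {p m : ℕ} {lam : ℕ → ℕ} (hp : 0 < p) :
    pweight p m lam = ∑ s ∈ Finset.range p, ddisp (runnerRows p m lam s) := by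
  rw [pweight, sum_div_eq hp]
  have h1 : ∀ s ∈ Finset.range p,
      (runnerCount p m lam s).choose 2 ≤ (runnerRows p m lam s).sum id := by
    intro s _
    rw [← card_runnerRows]
    exact choose_le_sum _
  have h2 : ∀ s ∈ Finset.range p, ddisp (runnerRows p m lam s)
      = (runnerRows p m lam s).sum id - (runnerCount p m lam s).choose 2 := by
    intro s _
    rw [ddisp, card_runnerRows]
  rw [Finset.sum_congr rfl h2]
  exact (Finset.sum_tsub_distrib _ h1).symm

end RRRAux

/-- For `λ` with Rouquier core `ρ` and weight `w`:
`λ` is `p`-restricted iff `λ^{p-1} = ∅`, and `λ` is `p`-regular iff `λ⁰ = ∅`. -/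
theorem rouquier_regular_restricted
    (p m w : ℕ) (hp : 0 < p) (hw : 0 < w)
    (ρ : ℕ → ℕ) (hρ : IsPartition ρ) (hρm : ∀ i, m ≤ i → ρ i = 0)
    (hrouq : IsRouquierCore p m w ρ)
    (lam : ℕ → ℕ) (hlam : IsPartition lam) (hlamm : ∀ i, m ≤ i → lam i = 0)
    (hcore : HasCore p m lam ρ) (hwt : pweight p m lam = w) :
    (PRestricted p lam ↔ ∀ j, pquot p m lam (p - 1) j = 0)
    ∧ (PRegular p lam ↔ ∀ j, pquot p m lam 0 j = 0) := by
  obtain ⟨hanti, -⟩ := hlam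
  have hsum : ∑ s ∈ Finset.range p, ddisp (runnerRows p m lam s) = w := by
    rw [← pweight_eq hp, hwt]
  have hc : ∀ s t, s < t → t < p →
      runnerCount p m lam s + (w-1) ≤ runnerCount p m lam t := by
    intro s t
    induction t with
    | zero => exact fun h _ => absurd h (Nat.not_lt_zero s)
    | succ t ih =>
      intro hst htp
      have hstep : runnerCount p m lam t + (w-1) ≤ runnerCount p m lam (t+1) := by
        have h := hrouq.2 (t+1) (by omega) htp
        simp only [Nat.add_sub_cancel] at h
        rw [hcore.2 t, hcore.2 (t+1)]
        exact h
      rcases Nat.lt_or_ge s t with h | h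
      · have := ih h (by omega)
        omega
      · have hseq : s = t := by omega
        rw [hseq]
        exact hstep
  constructor
  · rw [restricted_iff_Rab hp hanti hlamm, Rab_iff hp hw hc hsum]
    exact (pquot_zero_iff _).symm
  · rw [regular_iff_Gab hp hanti hlamm, Gab_iff hp hw hc hsum]
    exact (pquot_zero_iff _).symm
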